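/- The formula ¬((φ⇐ψ) ∧ (ψ⇐φ)) is valid on every Gödel temporal bi-relational model, where ¬χ abbreviates χ⇒⊥ and ⊥ is interpreted as the empty set. -/
import Mathlib


/-- Formulas of the Gödel temporal language. -/
inductive GF where
  | var : Nat → GF
  | and : GF → GF → GF
  | or : GF → GF → GF
  | imp : GF → GF → GF
  | coimp : GF → GF → GF
  | next : GF → GF
  | dia : GF → GF
  | box : GF → GF
deriving DecidableEq

/-- ⊥ := p ⇐ p -/
def GF.bot : GF := .coimp (.var 0) (.var 0)
/-- ⊤ := p ⇒ p -/
def GF.top : GF := .imp (.var 0) (.var 0)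
/-- ¬φ := φ ⇒ ⊥ -/
def GF.neg (φ : GF) : GF := .imp φ .bot
/-- φ ⟺ ψ := (φ⇒ψ) ∧ (ψ⇒φ) -/
def GF.iffF (φ ψ : GF) : GF := .and (.imp φ ψ) (.imp ψ φ)

/-- A Gödel temporal bi-relational model: (W,≤) a linear order, S : T → T,
and a valuation satisfying the standard semantic clauses. -/
structure BiModel where
  W : Type
  T : Type
  [ord : LinearOrder W]
  S : T → T
  val : GF → W → T → Prop
  var_dc : ∀ n w v t, val (.var n) w t → ord.le v w → val (.var n) v t
  and_iff : ∀ φ ψ w t, val (.and φ ψ) w t ↔ (val φ w t ∧ val ψ w t)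
  or_iff : ∀ φ ψ w t, val (.or φ ψ) w t ↔ (val φ w t ∨ val ψ w t)
  imp_iff : ∀ φ ψ w t, val (.imp φ ψ) w t ↔ (∀ v, ord.le v w → val φ v t → val ψ v t)
  coimp_iff : ∀ φ ψ w t, val (.coimp φ ψ) w t ↔ (∃ v, ord.le w v ∧ val φ v t ∧ ¬ val ψ v t)
  next_iff : ∀ φ w t, val (.next φ) w t ↔ val φ w (S t)
  dia_iff : ∀ φ w t, val (.dia φ) w t ↔ (∃ n : ℕ, val φ w (S^[n] t))
  box_iff : ∀ φ w t, val (.box φ) w t ↔ (∀ n : ℕ, val φ w (S^[n] t))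

lemma BiModel.dc (M : BiModel) : ∀ χ : GF, ∀ w v t, M.val χ w t → M.ord.le v w → M.val χ v t := by
  intro χ
  induction χ with
  | var n => intro w v t h hle; exact M.var_dc n w v t h hle
  | and φ ψ ih1 ih2 =>
      intro w v t h hle
      rw [M.and_iff] at h ⊢
      exact ⟨ih1 w v t h.1 hle, ih2 w v t h.2 hle⟩
  | or φ ψ ih1 ih2 =>
      intro w v t h hle
      rw [M.or_iff] at h ⊢
      exact h.imp (ih1 w v t · hle) (ih2 w v t · hle)
  | imp φ ψ ih1 ih2 =>
      intro w v t h hle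
      rw [M.imp_iff] at h ⊢
      intro u hu hφ
      exact h u (M.ord.le_trans u v w hu hle) hφ
  | coimp φ ψ ih1 ih2 =>
      intro w v t h hle
      rw [M.coimp_iff] at h ⊢
      obtain ⟨u, hu, h1, h2⟩ := h
      exact ⟨u, M.ord.le_trans v w u hle hu, h1, h2⟩
  | next φ ih =>
      intro w v t h hle
      rw [M.next_iff] at h ⊢
      exact ih w v _ h hle
  | dia φ ih =>
      intro w v t h hle
      rw [M.dia_iff] at h ⊢
      obtain ⟨n, hn⟩ := h
      exact ⟨n, ih w v _ hn hle⟩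
  | box φ ih =>
      intro w v t h hle
      rw [M.box_iff] at h ⊢
      exact fun n => ih w v _ (h n) hle

/-- ¬((φ⇐ψ) ∧ (ψ⇐φ)) is globally true on every bi-relational model. -/
theorem stmt2 (M : BiModel) (φ ψ : GF) (w : M.W) (t : M.T) :
    M.val (GF.neg (.and (.coimp φ ψ) (.coimp ψ φ))) w t := by
  rw [GF.neg, M.imp_iff]
  intro v hv h
  rw [M.and_iff, M.coimp_iff, M.coimp_iff] at h
  obtain ⟨⟨a, ha, hφa, hψa⟩, ⟨b, hb, hψb, hφb⟩⟩ := h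
  exfalso
  rcases M.ord.le_total a b with hab | hba
  · exact hψa (M.dc ψ b a _ hψb hab)
  · exact hφb (M.dc φ a b _ hφa hba)
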